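/- arXiv:1812.06794 — 4 statements merged into one kernel-verified Lean document; each statement's English description precedes it below -/
import Mathlib

section
/- Let a < b, n0, n1, n2 ∈ ℕ, and let B ∈ ℝ^{(n1+2n2)×(2n1+4n2)} be such that BT is invertible. Let x = (x0, x1, x2) ∈ X with fundamental state x̂ = (x0, x1', x2''). Then x = 𝒯 x̂; that is, for almost every s ∈ [a,b], (x0(s), x1(s), x2(s)) = G0(s) x̂(s) + ∫ₐˢ G1(s,θ) x̂(θ) dθ + ∫ₛᵇ G2(s,θ) x̂(θ) dθ. -/
open MeasureTheory Set Matrix ENNReal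

noncomputable section

/-- Boundary-full index: blocks for x1(a), x1(b), x2(a), x2(b), x2'(a), x2'(b). -/
abbrev BfI (n1 n2 : ℕ) : Type := Fin n1 ⊕ Fin n1 ⊕ Fin n2 ⊕ Fin n2 ⊕ Fin n2 ⊕ Fin n2
/-- Boundary-core index: blocks for x1(a), x2(a), x2'(a). -/
abbrev BcI (n1 n2 : ℕ) : Type := Fin n1 ⊕ Fin n2 ⊕ Fin n2
/-- State index: blocks for the (x0, x1, x2) components. -/
abbrev StI (n0 n1 n2 : ℕ) : Type := Fin n0 ⊕ Fin n1 ⊕ Fin n2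
/-- First-derivative index: blocks for (x1', x2'). -/
abbrev D1I (n1 n2 : ℕ) : Type := Fin n1 ⊕ Fin n2

/-- The matrix T with block rows [I,0,0],[I,0,0],[0,I,0],[0,I,(b-a)I],[0,0,I],[0,0,I]. -/
def Tmat (n1 n2 : ℕ) (a b : ℝ) : Matrix (BfI n1 n2) (BcI n1 n2) ℝ :=
  Matrix.of fun r c =>
    match r, c with
    | .inl i, .inl j => if i = j then 1 else 0
    | .inr (.inl i), .inl j => if i = j then 1 else 0
    | .inr (.inr (.inl i)), .inr (.inl j) => if i = j then 1 else 0
    | .inr (.inr (.inr (.inl i))), .inr (.inl j) => if i = j then 1 else 0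
    | .inr (.inr (.inr (.inl i))), .inr (.inr j) => if i = j then b - a else 0
    | .inr (.inr (.inr (.inr (.inl i)))), .inr (.inr j) => if i = j then 1 else 0
    | .inr (.inr (.inr (.inr (.inr i)))), .inr (.inr j) => if i = j then 1 else 0
    | _, _ => 0

/-- Q(θ) with block rows [0,0,0],[0,I,0],[0,0,0],[0,0,(b-θ)I],[0,0,0],[0,0,I]. -/
def Qmat (n0 n1 n2 : ℕ) (b θ : ℝ) : Matrix (BfI n1 n2) (StI n0 n1 n2) ℝ :=
  Matrix.of fun r c =>
    match r, c with
    | .inr (.inl i), .inr (.inl j) => if i = j then 1 else 0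
    | .inr (.inr (.inr (.inl i))), .inr (.inr j) => if i = j then b - θ else 0
    | .inr (.inr (.inr (.inr (.inr i)))), .inr (.inr j) => if i = j then 1 else 0
    | _, _ => 0

/-- K(s) with block rows [0,0,0],[I,0,0],[0,I,(s-a)I]. -/
def Kmat (n0 n1 n2 : ℕ) (a s : ℝ) : Matrix (StI n0 n1 n2) (BcI n1 n2) ℝ :=
  Matrix.of fun r c =>
    match r, c with
    | .inr (.inl i), .inl j => if i = j then 1 else 0
    | .inr (.inr i), .inr (.inl j) => if i = j then 1 else 0
    | .inr (.inr i), .inr (.inr j) => if i = j then s - a else 0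
    | _, _ => 0

/-- V = [[0,0,0],[0,0,I]]. -/
def Vmat (n1 n2 : ℕ) : Matrix (D1I n1 n2) (BcI n1 n2) ℝ :=
  Matrix.of fun r c =>
    match r, c with
    | .inr i, .inr (.inr j) => if i = j then 1 else 0
    | _, _ => 0

/-- G0 = [[I,0,0],[0,0,0],[0,0,0]]. -/
def G0mat (n0 n1 n2 : ℕ) : Matrix (StI n0 n1 n2) (StI n0 n1 n2) ℝ :=
  Matrix.of fun r c =>
    match r, c with
    | .inl i, .inl j => if i = j then 1 else 0
    | _, _ => 0

/-- L1(s,θ) = [[0,0,0],[0,I,0],[0,0,(s-θ)I]]. -/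
def L1mat (n0 n1 n2 : ℕ) (s θ : ℝ) : Matrix (StI n0 n1 n2) (StI n0 n1 n2) ℝ :=
  Matrix.of fun r c =>
    match r, c with
    | .inr (.inl i), .inr (.inl j) => if i = j then 1 else 0
    | .inr (.inr i), .inr (.inr j) => if i = j then s - θ else 0
    | _, _ => 0

/-- G3 = [[0,I,0],[0,0,0]]. -/
def G3mat (n0 n1 n2 : ℕ) : Matrix (D1I n1 n2) (StI n0 n1 n2) ℝ :=
  Matrix.of fun r c =>
    match r, c with
    | .inl i, .inr (.inl j) => if i = j then 1 else 0
    | _, _ => 0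

/-- L4 = [[0,0,0],[0,0,I]]. -/
def L4mat (n0 n1 n2 : ℕ) : Matrix (D1I n1 n2) (StI n0 n1 n2) ℝ :=
  Matrix.of fun r c =>
    match r, c with
    | .inr i, .inr (.inr j) => if i = j then 1 else 0
    | _, _ => 0

/-- G2(s,θ) = -K(s) (BT)⁻¹ B Q(θ). -/
def G2fun (n0 n1 n2 : ℕ) (a b : ℝ) (B : Matrix (BcI n1 n2) (BfI n1 n2) ℝ) (s θ : ℝ) :
    Matrix (StI n0 n1 n2) (StI n0 n1 n2) ℝ :=
  -(Kmat n0 n1 n2 a s * ((B * Tmat n1 n2 a b)⁻¹ * (B * Qmat n0 n1 n2 b θ)))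

/-- G1(s,θ) = L1(s,θ) + G2(s,θ). -/
def G1fun (n0 n1 n2 : ℕ) (a b : ℝ) (B : Matrix (BcI n1 n2) (BfI n1 n2) ℝ) (s θ : ℝ) :
    Matrix (StI n0 n1 n2) (StI n0 n1 n2) ℝ :=
  L1mat n0 n1 n2 s θ + G2fun n0 n1 n2 a b B s θ

/-- G5(s,θ) = -V (BT)⁻¹ B Q(θ). -/
def G5fun (n0 n1 n2 : ℕ) (a b : ℝ) (B : Matrix (BcI n1 n2) (BfI n1 n2) ℝ) (_s θ : ℝ) :
    Matrix (D1I n1 n2) (StI n0 n1 n2) ℝ :=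
  -(Vmat n1 n2 * ((B * Tmat n1 n2 a b)⁻¹ * (B * Qmat n0 n1 n2 b θ)))

/-- G4(s,θ) = L4 + G5(s,θ). -/
def G4fun (n0 n1 n2 : ℕ) (a b : ℝ) (B : Matrix (BcI n1 n2) (BfI n1 n2) ℝ) (s θ : ℝ) :
    Matrix (D1I n1 n2) (StI n0 n1 n2) ℝ :=
  L4mat n0 n1 n2 + G5fun n0 n1 n2 a b B s θ

/-- The 3-PI (partial integral) operator with multiplier M0 and kernels M1 (below
the diagonal) and M2 (above the diagonal) on the interval [a,b]. -/
def PIop {ι κ : Type*} [Fintype ι] [Fintype κ] (a b : ℝ)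
    (M0 : ℝ → Matrix κ ι ℝ) (M1 M2 : ℝ → ℝ → Matrix κ ι ℝ)
    (x : ℝ → ι → ℝ) : ℝ → κ → ℝ := fun s =>
  (M0 s).mulVec (x s) + (∫ θ in a..s, (M1 s θ).mulVec (x θ)) +
    ∫ θ in s..b, (M2 s θ).mulVec (x θ)

/-- The unitary operator 𝒯 = P_{G0,G1,G2}. -/
def Tcal (n0 n1 n2 : ℕ) (a b : ℝ) (B : Matrix (BcI n1 n2) (BfI n1 n2) ℝ)
    (x : ℝ → StI n0 n1 n2 → ℝ) : ℝ → StI n0 n1 n2 → ℝ :=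
  PIop a b (fun _ => G0mat n0 n1 n2) (G1fun n0 n1 n2 a b B) (G2fun n0 n1 n2 a b B) x

/-- The operator ℋ = P_{G3,G4,G5}. -/
def Hcal (n0 n1 n2 : ℕ) (a b : ℝ) (B : Matrix (BcI n1 n2) (BfI n1 n2) ℝ)
    (x : ℝ → StI n0 n1 n2 → ℝ) : ℝ → D1I n1 n2 → ℝ :=
  PIop a b (fun _ => G3mat n0 n1 n2) (G4fun n0 n1 n2 a b B) (G5fun n0 n1 n2 a b B) x

/-- Stacking three component functions into a single state function. -/
def stack3 {n0 n1 n2 : ℕ} (x0 : ℝ → Fin n0 → ℝ) (x1 : ℝ → Fin n1 → ℝ)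
    (x2 : ℝ → Fin n2 → ℝ) : ℝ → StI n0 n1 n2 → ℝ :=
  fun s => Sum.elim (x0 s) (Sum.elim (x1 s) (x2 s))

/-- The vector of full boundary values (x1(a), x1(b), x2(a), x2(b), x2'(a), x2'(b)). -/
def bfvec {n1 n2 : ℕ} (x1 : ℝ → Fin n1 → ℝ) (x2 x2' : ℝ → Fin n2 → ℝ) (a b : ℝ) :
    BfI n1 n2 → ℝ :=
  Sum.elim (x1 a) (Sum.elim (x1 b) (Sum.elim (x2 a) (Sum.elim (x2 b)
    (Sum.elim (x2' a) (x2' b)))))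

/-- x1 is of Sobolev class H¹ on [a,b] with derivative x1' ∈ L². -/
def IsH1 (a b : ℝ) {n : ℕ} (x1 x1' : ℝ → Fin n → ℝ) : Prop :=
  MemLp x1' 2 (volume.restrict (Icc a b)) ∧
    ∀ s ∈ Icc a b, x1 s = x1 a + ∫ η in a..s, x1' η

/-- x2 is of Sobolev class H² on [a,b] with first derivative x2' and second
derivative x2'' ∈ L². -/
def IsH2 (a b : ℝ) {n : ℕ} (x2 x2' x2'' : ℝ → Fin n → ℝ) : Prop :=
  (∀ s ∈ Icc a b, x2 s = x2 a + ∫ η in a..s, x2' η) ∧ IsH1 a b x2' x2''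

/-- Membership of (x0,x1,x2) (with derivative data x1', x2', x2'') in the space X. -/
def InX (a b : ℝ) {n0 n1 n2 : ℕ} (B : Matrix (BcI n1 n2) (BfI n1 n2) ℝ)
    (x0 : ℝ → Fin n0 → ℝ) (x1 x1' : ℝ → Fin n1 → ℝ) (x2 x2' x2'' : ℝ → Fin n2 → ℝ) : Prop :=
  MemLp x0 2 (volume.restrict (Icc a b)) ∧ IsH1 a b x1 x1' ∧ IsH2 a b x2 x2' x2'' ∧
    B.mulVec (bfvec x1 x2 x2' a b) = 0

/-- The L² inner product on [a,b]. -/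
def L2inner {n : ℕ} (a b : ℝ) (u v : ℝ → Fin n → ℝ) : ℝ :=
  ∫ s in a..b, u s ⬝ᵥ v s

/-- The L² inner product on [a,b] for state-indexed functions. -/
def L2innerSt {n0 n1 n2 : ℕ} (a b : ℝ) (u v : ℝ → StI n0 n1 n2 → ℝ) : ℝ :=
  ∫ s in a..b, u s ⬝ᵥ v s


namespace Stmt6Aux

variable {ι : Type*} [Fintype ι]

lemma integrable_pi {α : Type*} [DecidableEq ι] [MeasurableSpace α] {μ : Measure α}
    {f : α → ι → ℝ} (h : ∀ i, Integrable (fun x => f x i) μ) : Integrable f μ := by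
  have hf : f = fun x => ∑ i, (f x i) • Pi.single (M := fun _ : ι => ℝ) i 1 := by
    funext x j
    simp [Finset.sum_apply, Pi.single_apply, mul_ite]
  rw [hf]
  exact integrable_finset_sum _ fun i _ => (h i).smul_const _

lemma integrable_apply {α : Type*} [MeasurableSpace α] {μ : Measure α} {f : α → ι → ℝ}
    (h : Integrable f μ) (i : ι) : Integrable (fun x => f x i) μ :=
  (ContinuousLinearMap.proj (R := ℝ) (φ := fun _ : ι => ℝ) i).integrable_comp h

lemma II_apply {f : ℝ → ι → ℝ} {a b : ℝ} (h : IntervalIntegrable f volume a b) (i : ι) :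
    IntervalIntegrable (fun x => f x i) volume a b :=
  ⟨integrable_apply h.1 i, integrable_apply h.2 i⟩

lemma II_pi [DecidableEq ι] {f : ℝ → ι → ℝ} {a b : ℝ}
    (h : ∀ i, IntervalIntegrable (fun x => f x i) volume a b) :
    IntervalIntegrable f volume a b :=
  ⟨integrable_pi fun i => (h i).1, integrable_pi fun i => (h i).2⟩

lemma intervalIntegral_apply {f : ℝ → ι → ℝ} {a b : ℝ}
    (h : IntervalIntegrable f volume a b) (i : ι) :
    (∫ x in a..b, f x) i = ∫ x in a..b, f x i := by
  have := (ContinuousLinearMap.proj (R := ℝ) (φ := fun _ : ι => ℝ) i).intervalIntegral_comp_comm h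
  simpa using this.symm

lemma II_mulVec {κ : Type*} [Fintype κ] (M : Matrix κ ι ℝ) {f : ℝ → ι → ℝ} {a b : ℝ}
    (h : IntervalIntegrable f volume a b) :
    IntervalIntegrable (fun x => M.mulVec (f x)) volume a b := by
  have e : (fun x => M.mulVec (f x))
      = fun x => (LinearMap.toContinuousLinearMap (Matrix.mulVecLin M)) (f x) := by
    funext x; simp
  rw [e]
  exact ⟨(LinearMap.toContinuousLinearMap (Matrix.mulVecLin M)).integrable_comp h.1,
    (LinearMap.toContinuousLinearMap (Matrix.mulVecLin M)).integrable_comp h.2⟩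

lemma intervalIntegral_mulVec {κ : Type*} [Fintype κ] (M : Matrix κ ι ℝ) {f : ℝ → ι → ℝ}
    {a b : ℝ} (h : IntervalIntegrable f volume a b) :
    (∫ x in a..b, M.mulVec (f x)) = M.mulVec (∫ x in a..b, f x) := by
  have := (LinearMap.toContinuousLinearMap (Matrix.mulVecLin M)).intervalIntegral_comp_comm h
  simpa using this

lemma II_of_Icc {f : ℝ → ι → ℝ} {a b : ℝ} (hab : a ≤ b)
    (h : IntegrableOn f (Icc a b) volume) : IntervalIntegrable f volume a b :=
  (by rwa [Set.uIcc_of_le hab] : IntegrableOn f (Set.uIcc a b) volume).intervalIntegrable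

lemma iterated {E : Type*} [NormedAddCommGroup E] [NormedSpace ℝ E] [CompleteSpace E]
    {a s : ℝ} (hab : a ≤ s) {f : ℝ → E} (hf : IntegrableOn f (Set.Ioc a s) volume) :
    (∫ η in a..s, ∫ θ in a..η, f θ) = ∫ θ in a..s, (s - θ) • f θ := by
  haveI : IsFiniteMeasure (volume.restrict (Set.Ioc a s)) :=
    ⟨by rw [Measure.restrict_apply_univ, Real.volume_Ioc]; exact ENNReal.ofReal_lt_top⟩
  have hFint : Integrable (Function.uncurry fun η θ => (Set.Iic η).indicator f θ)
      ((volume.restrict (Set.Ioc a s)).prod (volume.restrict (Set.Ioc a s))) := by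
    have h1 : Integrable (fun p : ℝ × ℝ => f p.2)
        ((volume.restrict (Set.Ioc a s)).prod (volume.restrict (Set.Ioc a s))) := by
      simpa using (integrable_const (1 : ℝ)).smul_prod hf
    have heq : (Function.uncurry fun η θ => (Set.Iic η).indicator f θ)
        = {p : ℝ × ℝ | p.2 ≤ p.1}.indicator (fun p => f p.2) := by
      funext p
      by_cases h : p.2 ≤ p.1 <;> simp [Function.uncurry, Set.indicator, h]
    rw [heq]
    exact h1.indicator (measurableSet_le measurable_snd measurable_fst)
  have swap := MeasureTheory.integral_integral_swap hFint
  have hL : (∫ η in a..s, ∫ θ in a..η, f θ)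
      = ∫ η in Set.Ioc a s, ∫ θ in Set.Ioc a s, (Set.Iic η).indicator f θ := by
    rw [intervalIntegral.integral_of_le hab]
    refine setIntegral_congr_fun measurableSet_Ioc fun η hη => ?_
    rw [intervalIntegral.integral_of_le hη.1.le,
        setIntegral_indicator measurableSet_Iic, Set.Ioc_inter_Iic, inf_of_le_right hη.2]
  have hR : (∫ θ in Set.Ioc a s, ∫ η in Set.Ioc a s, (Set.Iic η).indicator f θ)
      = ∫ θ in a..s, (s - θ) • f θ := by
    rw [intervalIntegral.integral_of_le hab]
    refine setIntegral_congr_fun measurableSet_Ioc fun θ hθ => ?_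
    have h1 : (fun η => (Set.Iic η).indicator f θ) = (Set.Ici θ).indicator (fun _ => f θ) := by
      funext η
      by_cases h : θ ≤ η <;> simp [Set.indicator, h]
    rw [h1, setIntegral_indicator measurableSet_Ici, setIntegral_const]
    have h2 : Set.Ioc a s ∩ Set.Ici θ = Set.Icc θ s := by
      ext η
      simp only [Set.mem_inter_iff, Set.mem_Ioc, Set.mem_Ici, Set.mem_Icc]
      constructor
      · rintro ⟨⟨_, h2⟩, h3⟩; exact ⟨h3, h2⟩
      · rintro ⟨h1', h2'⟩; exact ⟨⟨lt_of_lt_of_le hθ.1 h1', h2'⟩, h1'⟩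
    rw [h2, Real.volume_real_Icc_of_le (by linarith [hθ.2] : θ ≤ s)]
  exact hL.trans (swap.trans hR)

variable {n0 n1 n2 : ℕ}

lemma Qmat_mulVec (b θ : ℝ) (v : StI n0 n1 n2 → ℝ) :
    (Qmat n0 n1 n2 b θ).mulVec v =
      Sum.elim (fun _ => (0:ℝ)) (Sum.elim (fun i => v (.inr (.inl i)))
        (Sum.elim (fun _ => 0) (Sum.elim (fun i => (b - θ) * v (.inr (.inr i)))
          (Sum.elim (fun _ => 0) (fun i => v (.inr (.inr i))))))) := by
  funext r
  rcases r with i | i | i | i | i | i <;>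
    simp [Qmat, Matrix.mulVec, dotProduct, Fintype.sum_sum_type, ite_mul]

lemma Kmat_mulVec (a s : ℝ) (v : BcI n1 n2 → ℝ) :
    (Kmat n0 n1 n2 a s).mulVec v =
      Sum.elim (fun _ => (0:ℝ)) (Sum.elim (fun i => v (.inl i))
        (fun i => v (.inr (.inl i)) + (s - a) * v (.inr (.inr i)))) := by
  funext r
  rcases r with i | i | i <;>
    simp [Kmat, Matrix.mulVec, dotProduct, Fintype.sum_sum_type, ite_mul]

lemma Tmat_mulVec (a b : ℝ) (v : BcI n1 n2 → ℝ) :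
    (Tmat n1 n2 a b).mulVec v =
      Sum.elim (fun i => v (.inl i)) (Sum.elim (fun i => v (.inl i))
        (Sum.elim (fun i => v (.inr (.inl i)))
          (Sum.elim (fun i => v (.inr (.inl i)) + (b - a) * v (.inr (.inr i)))
            (Sum.elim (fun i => v (.inr (.inr i))) (fun i => v (.inr (.inr i))))))) := by
  funext r
  rcases r with i | i | i | i | i | i <;>
    simp [Tmat, Matrix.mulVec, dotProduct, Fintype.sum_sum_type, ite_mul]

lemma L1mat_mulVec (s θ : ℝ) (v : StI n0 n1 n2 → ℝ) :
    (L1mat n0 n1 n2 s θ).mulVec v =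
      Sum.elim (fun _ => (0:ℝ)) (Sum.elim (fun i => v (.inr (.inl i)))
        (fun i => (s - θ) * v (.inr (.inr i)))) := by
  funext r
  rcases r with i | i | i <;>
    simp [L1mat, Matrix.mulVec, dotProduct, Fintype.sum_sum_type, ite_mul]

lemma G0mat_mulVec (v : StI n0 n1 n2 → ℝ) :
    (G0mat n0 n1 n2).mulVec v =
      Sum.elim (fun i => v (.inl i)) (Sum.elim (fun _ => (0:ℝ)) (fun _ => 0)) := by
  funext r
  rcases r with i | i | i <;>
    simp [G0mat, Matrix.mulVec, dotProduct, Fintype.sum_sum_type, ite_mul]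

/-- Explicit form of `(Qmat b θ).mulVec (stack3 x0 x1' x2'' θ)`. -/
def qfun (n0 n1 n2 : ℕ) (b : ℝ) (x1' : ℝ → Fin n1 → ℝ) (x2'' : ℝ → Fin n2 → ℝ)
    (θ : ℝ) : BfI n1 n2 → ℝ :=
  Sum.elim (fun _ => 0) (Sum.elim (x1' θ) (Sum.elim (fun _ => 0)
    (Sum.elim (fun i => (b - θ) * x2'' θ i) (Sum.elim (fun _ => 0) (x2'' θ)))))

/-- Explicit form of `(L1mat s θ).mulVec (stack3 x0 x1' x2'' θ)`. -/
def lfun (n0 n1 n2 : ℕ) (s : ℝ) (x1' : ℝ → Fin n1 → ℝ) (x2'' : ℝ → Fin n2 → ℝ)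
    (θ : ℝ) : StI n0 n1 n2 → ℝ :=
  Sum.elim (fun _ => 0) (Sum.elim (x1' θ) (fun i => (s - θ) * x2'' θ i))

lemma Qmat_mulVec_stack (b θ : ℝ) (x0 : ℝ → Fin n0 → ℝ) (x1' : ℝ → Fin n1 → ℝ)
    (x2'' : ℝ → Fin n2 → ℝ) :
    (Qmat n0 n1 n2 b θ).mulVec (stack3 x0 x1' x2'' θ) = qfun n0 n1 n2 b x1' x2'' θ := by
  rw [Qmat_mulVec]; rfl

lemma L1mat_mulVec_stack (s θ : ℝ) (x0 : ℝ → Fin n0 → ℝ) (x1' : ℝ → Fin n1 → ℝ)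
    (x2'' : ℝ → Fin n2 → ℝ) :
    (L1mat n0 n1 n2 s θ).mulVec (stack3 x0 x1' x2'' θ) = lfun n0 n1 n2 s x1' x2'' θ := by
  rw [L1mat_mulVec]; rfl

lemma taylor_id {n : ℕ} {a b : ℝ} {x2 x2' x2'' : ℝ → Fin n → ℝ}
    (h2a : ∀ u ∈ Icc a b, x2 u = x2 a + ∫ η in a..u, x2' η)
    (h2b : ∀ u ∈ Icc a b, x2' u = x2' a + ∫ η in a..u, x2'' η)
    (hi : IntegrableOn x2'' (Icc a b) volume)
    {s : ℝ} (hs : s ∈ Icc a b) :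
    x2 s = x2 a + ((s - a) • x2' a + ∫ θ in a..s, (s - θ) • x2'' θ) := by
  have has : a ≤ s := hs.1
  have hIcc : IntegrableOn x2'' (Icc a s) volume :=
    hi.mono_set (Set.Icc_subset_Icc le_rfl hs.2)
  have hIs : IntegrableOn x2'' (Set.Ioc a s) volume :=
    hIcc.mono_set Set.Ioc_subset_Icc_self
  have hiter : IntervalIntegrable (fun η => ∫ θ in a..η, x2'' θ) volume a s := by
    apply ContinuousOn.intervalIntegrable
    exact intervalIntegral.continuousOn_primitive_interval
      (by rwa [Set.uIcc_of_le has])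
  have hc : Set.EqOn x2' (fun η => x2' a + ∫ θ in a..η, x2'' θ) (Set.uIcc a s) := by
    rw [Set.uIcc_of_le has]
    intro η hη
    exact h2b η ⟨hη.1, hη.2.trans hs.2⟩
  rw [h2a s hs, intervalIntegral.integral_congr hc,
      intervalIntegral.integral_add intervalIntegrable_const hiter,
      intervalIntegral.integral_const, iterated has hIs]

end Stmt6Aux

/-- for x ∈ X with fundamental state x̂ = (x0, x1', x2''),
one has x = 𝒯 x̂. -/
theorem stmt6 (a b : ℝ) (hab : a < b) (n0 n1 n2 : ℕ)
    (B : Matrix (BcI n1 n2) (BfI n1 n2) ℝ)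
    (hBT : IsUnit (B * Tmat n1 n2 a b))
    (x0 : ℝ → Fin n0 → ℝ) (x1 x1' : ℝ → Fin n1 → ℝ) (x2 x2' x2'' : ℝ → Fin n2 → ℝ)
    (hX : InX a b B x0 x1 x1' x2 x2' x2'') :
    ∀ᵐ s ∂(volume.restrict (Icc a b)),
      stack3 x0 x1 x2 s = Tcal n0 n1 n2 a b B (stack3 x0 x1' x2'') s := by
  classical
  obtain ⟨hx0, ⟨hx1'L2, hx1eq⟩, ⟨hx2eq, hx2''L2, hx2'eq⟩, hBbc⟩ := hX
  have hab' : a ≤ b := hab.le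
  haveI : IsFiniteMeasure (volume.restrict (Icc a b)) :=
    ⟨by rw [Measure.restrict_apply_univ, Real.volume_Icc]; exact ENNReal.ofReal_lt_top⟩
  have hx0I : IntegrableOn x0 (Icc a b) volume := hx0.integrable one_le_two
  have hx1I : IntegrableOn x1' (Icc a b) volume := hx1'L2.integrable one_le_two
  have hx2I : IntegrableOn x2'' (Icc a b) volume := hx2''L2.integrable one_le_two
  have ix0 : IntervalIntegrable x0 volume a b := Stmt6Aux.II_of_Icc hab' hx0I
  have ix1 : IntervalIntegrable x1' volume a b := Stmt6Aux.II_of_Icc hab' hx1I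
  have ix2 : IntervalIntegrable x2'' volume a b := Stmt6Aux.II_of_Icc hab' hx2I
  have hdet : (B * Tmat n1 n2 a b)⁻¹ * (B * Tmat n1 n2 a b) = 1 :=
    Matrix.nonsing_inv_mul _ ((Matrix.isUnit_iff_isUnit_det _).1 hBT)
  -- the boundary-core vector
  set bc : BcI n1 n2 → ℝ := Sum.elim (x1 a) (Sum.elim (x2 a) (x2' a)) with hbcdef
  -- integrability of q
  have iq : IntervalIntegrable (Stmt6Aux.qfun n0 n1 n2 b x1' x2'') volume a b := by
    apply Stmt6Aux.II_pi
    rintro (i | i | i | i | i | i)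
    · exact intervalIntegrable_const
    · exact Stmt6Aux.II_apply ix1 i
    · exact intervalIntegrable_const
    · exact (Stmt6Aux.II_apply ix2 i).continuousOn_mul
        ((continuous_const.sub continuous_id).continuousOn)
    · exact intervalIntegrable_const
    · exact Stmt6Aux.II_apply ix2 i
  -- Taylor identity for x2
  have htay : ∀ u ∈ Icc a b,
      x2 u = x2 a + ((u - a) • x2' a + ∫ θ in a..u, (u - θ) • x2'' θ) :=
    fun u hu => Stmt6Aux.taylor_id hx2eq hx2'eq hx2I hu
  have hsm : ∀ u : ℝ, IntervalIntegrable (fun θ => (u - θ) • x2'' θ) volume a b := by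
    intro u
    apply Stmt6Aux.II_pi
    intro i
    exact (Stmt6Aux.II_apply ix2 i).continuousOn_mul
      ((continuous_const.sub continuous_id).continuousOn)
  -- the integral of q over [a,b]
  have hw : (∫ θ in a..b, Stmt6Aux.qfun n0 n1 n2 b x1' x2'' θ)
      = bfvec x1 x2 x2' a b - (Tmat n1 n2 a b).mulVec bc := by
    funext r
    rw [Pi.sub_apply, Stmt6Aux.intervalIntegral_apply iq r, Stmt6Aux.Tmat_mulVec]
    rcases r with i | i | i | i | i | i
    · simp [Stmt6Aux.qfun, bfvec, hbcdef]
    · have h := congrFun (hx1eq b ⟨hab', le_rfl⟩) i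
      rw [Pi.add_apply, Stmt6Aux.intervalIntegral_apply ix1 i] at h
      simp only [Stmt6Aux.qfun, Sum.elim_inr, Sum.elim_inl, bfvec, hbcdef, h]
      ring
    · simp [Stmt6Aux.qfun, bfvec, hbcdef]
    · have h := congrFun (htay b ⟨hab', le_rfl⟩) i
      rw [Pi.add_apply, Pi.add_apply, Pi.smul_apply,
        Stmt6Aux.intervalIntegral_apply (hsm b) i] at h
      simp only [Pi.smul_apply, smul_eq_mul] at h
      simp only [Stmt6Aux.qfun, Sum.elim_inr, Sum.elim_inl, bfvec, hbcdef, h]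
      ring
    · simp [Stmt6Aux.qfun, bfvec, hbcdef]
    · have h := congrFun (hx2'eq b ⟨hab', le_rfl⟩) i
      rw [Pi.add_apply, Stmt6Aux.intervalIntegral_apply ix2 i] at h
      simp only [Stmt6Aux.qfun, Sum.elim_inr, Sum.elim_inl, bfvec, hbcdef, h]
      ring
  -- C := K(s) (BT)⁻¹ B  (defined for each s below)
  filter_upwards [ae_restrict_mem measurableSet_Icc] with s hs
  obtain ⟨has, hsb⟩ := hs
  have hsub1 : Set.uIcc a s ⊆ Set.uIcc a b := by
    rw [Set.uIcc_of_le has, Set.uIcc_of_le hab']; exact Set.Icc_subset_Icc le_rfl hsb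
  have hsub2 : Set.uIcc s b ⊆ Set.uIcc a b := by
    rw [Set.uIcc_of_le hsb, Set.uIcc_of_le hab']; exact Set.Icc_subset_Icc has le_rfl
  set C : Matrix (StI n0 n1 n2) (BfI n1 n2) ℝ :=
    Kmat n0 n1 n2 a s * ((B * Tmat n1 n2 a b)⁻¹ * B) with hCdef
  have hG2 : ∀ θ, (G2fun n0 n1 n2 a b B s θ).mulVec (stack3 x0 x1' x2'' θ)
      = -(C.mulVec (Stmt6Aux.qfun n0 n1 n2 b x1' x2'' θ)) := by
    intro θ
    have hm : Kmat n0 n1 n2 a s * ((B * Tmat n1 n2 a b)⁻¹ * (B * Qmat n0 n1 n2 b θ))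
        = C * Qmat n0 n1 n2 b θ := by
      simp only [hCdef, Matrix.mul_assoc]
    rw [G2fun, hm, Matrix.neg_mulVec, ← Matrix.mulVec_mulVec,
      Stmt6Aux.Qmat_mulVec_stack]
  have iCq : IntervalIntegrable
      (fun θ => -(C.mulVec (Stmt6Aux.qfun n0 n1 n2 b x1' x2'' θ))) volume a b :=
    (Stmt6Aux.II_mulVec C iq).neg
  have ilf : IntervalIntegrable (Stmt6Aux.lfun n0 n1 n2 s x1' x2'') volume a s := by
    apply Stmt6Aux.II_pi
    rintro (i | i | i)
    · exact intervalIntegrable_const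
    · exact Stmt6Aux.II_apply (ix1.mono_set hsub1) i
    · exact (Stmt6Aux.II_apply (ix2.mono_set hsub1) i).continuousOn_mul
        ((continuous_const.sub continuous_id).continuousOn)
  -- C applied to the boundary identity
  have hCw : C.mulVec (bfvec x1 x2 x2' a b - (Tmat n1 n2 a b).mulVec bc)
      = -((Kmat n0 n1 n2 a s).mulVec bc) := by
    rw [Matrix.mulVec_sub]
    have h1 : C.mulVec (bfvec x1 x2 x2' a b) = 0 := by
      rw [hCdef, ← Matrix.mulVec_mulVec, ← Matrix.mulVec_mulVec, hBbc,
        Matrix.mulVec_zero, Matrix.mulVec_zero]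
    have h2 : C.mulVec ((Tmat n1 n2 a b).mulVec bc) = (Kmat n0 n1 n2 a s).mulVec bc := by
      rw [Matrix.mulVec_mulVec]
      have hCT : C * Tmat n1 n2 a b = Kmat n0 n1 n2 a s := by
        rw [hCdef, Matrix.mul_assoc, Matrix.mul_assoc, hdet, Matrix.mul_one]
      rw [hCT]
    rw [h1, h2, zero_sub]
  -- computing 𝒯 x̂ at s
  have e1 : (∫ θ in a..s, (G1fun n0 n1 n2 a b B s θ).mulVec (stack3 x0 x1' x2'' θ))
      = (∫ θ in a..s, Stmt6Aux.lfun n0 n1 n2 s x1' x2'' θ)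
        + ∫ θ in a..s, -(C.mulVec (Stmt6Aux.qfun n0 n1 n2 b x1' x2'' θ)) := by
    rw [← intervalIntegral.integral_add ilf (iCq.mono_set hsub1)]
    apply intervalIntegral.integral_congr
    intro θ _
    simp only [G1fun]
    rw [Matrix.add_mulVec, Stmt6Aux.L1mat_mulVec_stack, hG2 θ]
  have e2 : (∫ θ in s..b, (G2fun n0 n1 n2 a b B s θ).mulVec (stack3 x0 x1' x2'' θ))
      = ∫ θ in s..b, -(C.mulVec (Stmt6Aux.qfun n0 n1 n2 b x1' x2'' θ)) :=
    intervalIntegral.integral_congr fun θ _ => hG2 θ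
  have e3 : (∫ θ in a..s, -(C.mulVec (Stmt6Aux.qfun n0 n1 n2 b x1' x2'' θ)))
      + (∫ θ in s..b, -(C.mulVec (Stmt6Aux.qfun n0 n1 n2 b x1' x2'' θ)))
      = (Kmat n0 n1 n2 a s).mulVec bc := by
    rw [intervalIntegral.integral_add_adjacent_intervals (iCq.mono_set hsub1)
        (iCq.mono_set hsub2), intervalIntegral.integral_neg,
      Stmt6Aux.intervalIntegral_mulVec C iq, hw, hCw, neg_neg]
  have key : Tcal n0 n1 n2 a b B (stack3 x0 x1' x2'') s
      = (G0mat n0 n1 n2).mulVec (stack3 x0 x1' x2'' s)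
        + (∫ θ in a..s, Stmt6Aux.lfun n0 n1 n2 s x1' x2'' θ)
        + (Kmat n0 n1 n2 a s).mulVec bc := by
    simp only [Tcal, PIop]
    rw [e1, e2, ← e3]
    abel
  rw [key, Stmt6Aux.G0mat_mulVec, Stmt6Aux.Kmat_mulVec]
  funext i
  rcases i with i | i | i
  · simp only [stack3, Pi.add_apply, Sum.elim_inl, hbcdef,
      Stmt6Aux.intervalIntegral_apply ilf (Sum.inl i)]
    simp [Stmt6Aux.lfun]
  · have h := congrFun (hx1eq s ⟨has, hsb⟩) i
    rw [Pi.add_apply, Stmt6Aux.intervalIntegral_apply (ix1.mono_set hsub1) i] at h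
    simp only [stack3, Pi.add_apply, Sum.elim_inr, Sum.elim_inl, hbcdef,
      Stmt6Aux.intervalIntegral_apply ilf (Sum.inr (Sum.inl i))]
    simp only [Stmt6Aux.lfun, Sum.elim_inr, Sum.elim_inl]
    rw [h]; ring
  · have h := congrFun (htay s ⟨has, hsb⟩) i
    rw [Pi.add_apply, Pi.add_apply, Pi.smul_apply,
      Stmt6Aux.intervalIntegral_apply ((hsm s).mono_set hsub1) i] at h
    simp only [Pi.smul_apply, smul_eq_mul] at h
    simp only [stack3, Pi.add_apply, Sum.elim_inr, Sum.elim_inl, hbcdef,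
      Stmt6Aux.intervalIntegral_apply ilf (Sum.inr (Sum.inr i))]
    simp only [Stmt6Aux.lfun, Sum.elim_inr, Sum.elim_inl]
    rw [h]; ring

end
end

section
/- Let a < b, n0, n1, n2 ∈ ℕ, and let B ∈ ℝ^{(n1+2n2)×(2n1+4n2)} be such that BT is invertible. Let x = (x0, x1, x2) ∈ X with fundamental state x̂ = (x0, x1', x2''). Then for almost every s ∈ [a,b], (x1'(s), x2'(s)) = G3(s) x̂(s) + ∫ₐˢ G4(s,θ) x̂(θ) dθ + ∫ₛᵇ G5(s,θ) x̂(θ) dθ, i.e., (x1', x2') = ℋ x̂ in L²([a,b];ℝ^{n1+n2}). -/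
open MeasureTheory Set Matrix ENNReal

noncomputable section

namespace Stmt8Aux

variable {a b c d : ℝ}

lemma intervalIntegrable_of_integrableOn_Icc {E : Type*} [NormedAddCommGroup E]
    {f : ℝ → E} (hab : a ≤ b) (hf : IntegrableOn f (Icc a b) volume)
    (hc : c ∈ Icc a b) (hd : d ∈ Icc a b) : IntervalIntegrable f volume c d := by
  apply (hf.mono_set _).intervalIntegrable
  rw [← uIcc_of_le hab] at hc hd ⊢
  exact uIcc_subset_uIcc hc hd

/-- mulVec as a continuous linear map. -/
def mulVecCLM {ι κ : Type*} [Fintype ι] [Fintype κ] (M : Matrix κ ι ℝ) :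
    (ι → ℝ) →L[ℝ] (κ → ℝ) where
  toLinearMap := M.mulVecLin
  cont := continuous_pi fun k =>
    continuous_finset_sum _ fun j _ => continuous_const.mul (continuous_apply j)

@[simp] lemma mulVecCLM_apply {ι κ : Type*} [Fintype ι] [Fintype κ] (M : Matrix κ ι ℝ)
    (v : ι → ℝ) : mulVecCLM M v = M.mulVec v := rfl

lemma iint_apply {ι : Type*} [Fintype ι] {f : ℝ → ι → ℝ}
    (hf : IntervalIntegrable f volume c d) (i : ι) :
    (∫ θ in c..d, f θ) i = ∫ θ in c..d, f θ i :=
  ((ContinuousLinearMap.proj (R := ℝ) (φ := fun _ : ι => ℝ) i).intervalIntegral_comp_comm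
    hf).symm

lemma clm_comp_intervalIntegrable {E F : Type*} [NormedAddCommGroup E] [NormedSpace ℝ E]
    [NormedAddCommGroup F] [NormedSpace ℝ F] (L : E →L[ℝ] F) {f : ℝ → E}
    (hf : IntervalIntegrable f volume c d) :
    IntervalIntegrable (fun θ => L (f θ)) volume c d :=
  ⟨L.integrable_comp hf.1, L.integrable_comp hf.2⟩

lemma triangle {f : ℝ → ℝ} (hab : a ≤ b) (hf : IntegrableOn f (Icc a b) volume) :
    ∫ θ in a..b, (∫ η in a..θ, f η) = ∫ η in a..b, (b - η) * f η := by
  have hfIoc : IntegrableOn f (Ioc a b) volume := hf.mono_set Ioc_subset_Icc_self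
  set ν := volume.restrict (Ioc a b) with hν
  have : IsFiniteMeasure ν := ⟨by simpa [hν] using measure_Ioc_lt_top⟩
  have hmeas : MeasurableSet {p : ℝ × ℝ | p.2 ≤ p.1} :=
    measurableSet_le measurable_snd measurable_fst
  have hint : Integrable ({p : ℝ × ℝ | p.2 ≤ p.1}.indicator fun p : ℝ × ℝ => f p.2)
      (ν.prod ν) := by
    apply Integrable.indicator _ hmeas
    simpa using (integrable_const (1 : ℝ)).mul_prod hfIoc
  have key := MeasureTheory.integral_integral_swap
    (f := fun θ η => ({p : ℝ × ℝ | p.2 ≤ p.1}.indicator fun p : ℝ × ℝ => f p.2) (θ, η))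
    (μ := ν) (ν := ν) hint
  have hL : ∫ θ in a..b, (∫ η in a..θ, f η) =
      ∫ θ, (∫ η, ({p : ℝ × ℝ | p.2 ≤ p.1}.indicator fun p : ℝ × ℝ => f p.2) (θ, η) ∂ν) ∂ν := by
    rw [intervalIntegral.integral_of_le hab]
    apply integral_congr_ae
    filter_upwards [ae_restrict_mem measurableSet_Ioc] with θ hθ
    have h1 : (fun η => ({p : ℝ × ℝ | p.2 ≤ p.1}.indicator fun p : ℝ × ℝ => f p.2) (θ, η)) =
        (Iic θ).indicator f := by
      funext η
      by_cases h : η ≤ θ <;> simp [Set.indicator_apply, h]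
    rw [h1, MeasureTheory.setIntegral_indicator measurableSet_Iic, Set.Ioc_inter_Iic,
      intervalIntegral.integral_of_le hθ.1.le, min_eq_right hθ.2]
  have hR : ∫ η, (∫ θ, ({p : ℝ × ℝ | p.2 ≤ p.1}.indicator fun p : ℝ × ℝ => f p.2) (θ, η) ∂ν) ∂ν =
      ∫ η in a..b, (b - η) * f η := by
    rw [intervalIntegral.integral_of_le hab]
    apply integral_congr_ae
    filter_upwards [ae_restrict_mem measurableSet_Ioc] with η hη
    have h1 : (fun θ => ({p : ℝ × ℝ | p.2 ≤ p.1}.indicator fun p : ℝ × ℝ => f p.2) (θ, η)) =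
        (Ici η).indicator (fun _ => f η) := by
      funext θ
      by_cases h : η ≤ θ <;> simp [Set.indicator_apply, h]
    have h2 : Ioc a b ∩ Ici η = Icc η b := by
      ext θ
      simp only [mem_inter_iff, mem_Ioc, mem_Ici, mem_Icc]
      constructor
      · rintro ⟨⟨_, hb'⟩, hh⟩; exact ⟨hh, hb'⟩
      · rintro ⟨h1', h2'⟩; exact ⟨⟨lt_of_lt_of_le hη.1 h1', h2'⟩, h1'⟩
    rw [h1, MeasureTheory.setIntegral_indicator measurableSet_Ici, h2,
      MeasureTheory.setIntegral_const,
      Real.volume_real_Icc_of_le hη.2, smul_eq_mul]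
  rw [hL, key, hR]

/-- Assembling three blocks into a state-indexed vector, as a continuous linear map. -/
def assembleCLM (n0 n1 n2 : ℕ) :
    ((Fin n0 → ℝ) × (Fin n1 → ℝ) × (Fin n2 → ℝ)) →L[ℝ] (StI n0 n1 n2 → ℝ) :=
  LinearMap.toContinuousLinearMap
    { toFun := fun p => Sum.elim p.1 (Sum.elim p.2.1 p.2.2)
      map_add' := fun p q => by funext r; rcases r with i | i | i <;> rfl
      map_smul' := fun c p => by funext r; rcases r with i | i | i <;> rfl }

@[simp] lemma assembleCLM_apply (n0 n1 n2 : ℕ)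
    (p : (Fin n0 → ℝ) × (Fin n1 → ℝ) × (Fin n2 → ℝ)) :
    assembleCLM n0 n1 n2 p = Sum.elim p.1 (Sum.elim p.2.1 p.2.2) := rfl

end Stmt8Aux


set_option maxHeartbeats 1600000 in
/-- for x ∈ X with fundamental state x̂ = (x0, x1', x2''),
one has (x1', x2') = ℋ x̂ in L². -/
theorem stmt8 (a b : ℝ) (hab : a < b) (n0 n1 n2 : ℕ)
    (B : Matrix (BcI n1 n2) (BfI n1 n2) ℝ)
    (hBT : IsUnit (B * Tmat n1 n2 a b))
    (x0 : ℝ → Fin n0 → ℝ) (x1 x1' : ℝ → Fin n1 → ℝ) (x2 x2' x2'' : ℝ → Fin n2 → ℝ)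
    (hX : InX a b B x0 x1 x1' x2 x2' x2'') :
    ∀ᵐ s ∂(volume.restrict (Icc a b)),
      Sum.elim (x1' s) (x2' s) = Hcal n0 n1 n2 a b B (stack3 x0 x1' x2'') s := by
  classical
  obtain ⟨hx0L, ⟨hx1L, hx1e⟩, ⟨hx2e, hx2L, hx2de⟩, hBbf⟩ := hX
  have hab' : a ≤ b := hab.le
  have hamem : a ∈ Icc a b := left_mem_Icc.mpr hab'
  have hbmem : b ∈ Icc a b := right_mem_Icc.mpr hab'
  have : IsFiniteMeasure (volume.restrict (Icc a b)) :=
    ⟨by rw [Measure.restrict_apply_univ]; exact measure_Icc_lt_top⟩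
  have hI0 : IntegrableOn x0 (Icc a b) volume := hx0L.integrable one_le_two
  have hI1 : IntegrableOn x1' (Icc a b) volume := hx1L.integrable one_le_two
  have hI2 : IntegrableOn x2'' (Icc a b) volume := hx2L.integrable one_le_two
  set Xh : ℝ → StI n0 n1 n2 → ℝ := stack3 x0 x1' x2'' with hXh
  have hstackIcc : IntegrableOn Xh (Icc a b) volume := by
    have h := (Stmt8Aux.assembleCLM n0 n1 n2).integrable_comp (hI0.prodMk (hI1.prodMk hI2))
    refine h.congr (ae_of_all _ fun s => ?_)
    rw [hXh]
    funext r
    rcases r with i | i | i <;> rfl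
  have hXII : ∀ c ∈ Icc a b, ∀ d ∈ Icc a b, IntervalIntegrable Xh volume c d :=
    fun c hc d hd => Stmt8Aux.intervalIntegrable_of_integrableOn_Icc hab' hstackIcc hc hd
  have hx1II : IntervalIntegrable x1' volume a b :=
    Stmt8Aux.intervalIntegrable_of_integrableOn_Icc hab' hI1 hamem hbmem
  have hx2''II : ∀ c ∈ Icc a b, ∀ d ∈ Icc a b, IntervalIntegrable x2'' volume c d :=
    fun c hc d hd => Stmt8Aux.intervalIntegrable_of_integrableOn_Icc hab' hI2 hc hd
  set Nm : Matrix (BfI n1 n2) (StI n0 n1 n2) ℝ := Qmat n0 n1 n2 1 0 - Qmat n0 n1 n2 0 0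
    with hNm
  set Qv : ℝ → BfI n1 n2 → ℝ := fun θ => (Qmat n0 n1 n2 b θ).mulVec (Xh θ) with hQvdef
  have hQdecomp : ∀ θ : ℝ, Qmat n0 n1 n2 b θ = Qmat n0 n1 n2 b b + (b - θ) • Nm := by
    intro θ
    ext r c
    rcases r with i | i | i | i | i | i <;> rcases c with j | j | j <;>
      simp [hNm, Qmat, Matrix.add_apply, Matrix.smul_apply, Matrix.sub_apply, smul_eq_mul]
  have hQvIcc : IntegrableOn Qv (Icc a b) volume := by
    have h1 : IntegrableOn (fun θ => (Stmt8Aux.mulVecCLM (Qmat n0 n1 n2 b b)) (Xh θ))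
        (Icc a b) volume :=
      ContinuousLinearMap.integrable_comp (Stmt8Aux.mulVecCLM (Qmat n0 n1 n2 b b)) hstackIcc
    have h2 : IntegrableOn (fun θ => (Stmt8Aux.mulVecCLM Nm) (Xh θ)) (Icc a b) volume :=
      ContinuousLinearMap.integrable_comp (Stmt8Aux.mulVecCLM Nm) hstackIcc
    have h3 : IntegrableOn (fun θ => (b - θ) • ((Stmt8Aux.mulVecCLM Nm) (Xh θ)))
        (Icc a b) volume :=
      h2.continuousOn_smul ((continuous_const.sub continuous_id).continuousOn) isCompact_Icc
    refine IntegrableOn.congr_fun (h1.add h3) (fun θ hθ => ?_) measurableSet_Icc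
    simp only [Stmt8Aux.mulVecCLM_apply, hQvdef]
    rw [hQdecomp θ, Matrix.add_mulVec, Matrix.smul_mulVec]
    rfl
  have hQvII : ∀ c ∈ Icc a b, ∀ d ∈ Icc a b, IntervalIntegrable Qv volume c d :=
    fun c hc d hd => Stmt8Aux.intervalIntegrable_of_integrableOn_Icc hab' hQvIcc hc hd
  have hQvab : IntervalIntegrable Qv volume a b := hQvII a hamem b hbmem
  have hx2'cont : ContinuousOn x2' (Icc a b) := by
    have h1 : ContinuousOn (fun s => x2' a + ∫ η in a..s, x2'' η) (Icc a b) := by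
      refine continuousOn_const.add ?_
      have h2 : IntegrableOn x2'' (uIcc a b) volume := by rwa [uIcc_of_le hab']
      have h3 := intervalIntegral.continuousOn_primitive_interval h2
      rwa [uIcc_of_le hab'] at h3
    exact h1.congr fun s hs => hx2de s hs
  have hI2' : IntegrableOn x2' (Icc a b) volume := hx2'cont.integrableOn_Icc
  have hx2'II : IntervalIntegrable x2' volume a b :=
    Stmt8Aux.intervalIntegrable_of_integrableOn_Icc hab' hI2' hamem hbmem
  have hprim : ∀ i : Fin n2,
      ∫ θ in a..b, (∫ η in a..θ, x2'' η i) = ∫ η in a..b, (b - η) * x2'' η i := fun i =>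
    Stmt8Aux.triangle hab'
      ((ContinuousLinearMap.proj (R := ℝ) (φ := fun _ : Fin n2 => ℝ) i).integrable_comp hI2)
  have hprimII : ∀ i : Fin n2,
      IntervalIntegrable (fun θ => ∫ η in a..θ, x2'' η i) volume a b := by
    intro i
    apply ContinuousOn.intervalIntegrable
    have h2 : IntegrableOn (fun θ => x2'' θ i) (uIcc a b) volume := by
      rw [uIcc_of_le hab']
      exact (ContinuousLinearMap.proj (R := ℝ) (φ := fun _ : Fin n2 => ℝ) i).integrable_comp hI2
    exact intervalIntegral.continuousOn_primitive_interval h2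
  set xbc : BcI n1 n2 → ℝ := Sum.elim (x1 a) (Sum.elim (x2 a) (x2' a)) with hxbc
  have hQvcomp : ∀ (θ : ℝ) (r : BfI n1 n2), Qv θ r =
      Sum.elim (0 : Fin n1 → ℝ) (Sum.elim (x1' θ) (Sum.elim (0 : Fin n2 → ℝ)
        (Sum.elim (fun j => (b - θ) * x2'' θ j) (Sum.elim (0 : Fin n2 → ℝ) (x2'' θ))))) r := by
    intro θ r
    rcases r with i | i | i | i | i | i <;>
      simp [hQvdef, Qmat, Matrix.mulVec, dotProduct, hXh, stack3,
        Fintype.sum_sum_type]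
  have hkey : (Tmat n1 n2 a b).mulVec xbc + (∫ θ in a..b, Qv θ) = bfvec x1 x2 x2' a b := by
    funext r
    simp only [Pi.add_apply]
    rw [Stmt8Aux.iint_apply hQvab r]
    rcases r with i | i | i | i | i | i
    · simp [hQvcomp, Tmat, bfvec, hxbc, Matrix.mulVec, dotProduct,
        Fintype.sum_sum_type]
    · have h := congrFun (hx1e b hbmem) i
      rw [Pi.add_apply, Stmt8Aux.iint_apply hx1II i] at h
      simp only [hQvcomp, Sum.elim_inl, Sum.elim_inr]
      simp [Tmat, bfvec, hxbc, Matrix.mulVec, dotProduct, Fintype.sum_sum_type]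
      linarith [h]
    · simp [hQvcomp, Tmat, bfvec, hxbc, Matrix.mulVec, dotProduct,
        Fintype.sum_sum_type]
    · have h1 := congrFun (hx2e b hbmem) i
      rw [Pi.add_apply, Stmt8Aux.iint_apply hx2'II i] at h1
      have h2 : ∫ θ in a..b, x2' θ i = ((b - a) * x2' a i + ∫ η in a..b, (b - η) * x2'' η i) := by
        have e1 : EqOn (fun θ => x2' θ i)
            (fun θ => x2' a i + ∫ η in a..θ, x2'' η i) (uIcc a b) := by
          intro θ hθ
          rw [uIcc_of_le hab'] at hθ
          have h3 := congrFun (hx2de θ hθ) i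
          rw [Pi.add_apply, Stmt8Aux.iint_apply (hx2''II a hamem θ hθ) i] at h3
          exact h3
        rw [intervalIntegral.integral_congr e1,
          intervalIntegral.integral_add intervalIntegrable_const (hprimII i),
          intervalIntegral.integral_const, hprim i, smul_eq_mul]
      simp only [hQvcomp, Sum.elim_inl, Sum.elim_inr]
      simp [Tmat, bfvec, hxbc, Matrix.mulVec, dotProduct, Fintype.sum_sum_type]
      linarith [h1, h2]
    · simp [hQvcomp, Tmat, bfvec, hxbc, Matrix.mulVec, dotProduct,
        Fintype.sum_sum_type]
    · have h := congrFun (hx2de b hbmem) i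
      rw [Pi.add_apply, Stmt8Aux.iint_apply (hx2''II a hamem b hbmem) i] at h
      simp only [hQvcomp, Sum.elim_inl, Sum.elim_inr]
      simp [Tmat, bfvec, hxbc, Matrix.mulVec, dotProduct, Fintype.sum_sum_type]
      linarith [h]
  have hdet : IsUnit (B * Tmat n1 n2 a b).det := (Matrix.isUnit_iff_isUnit_det _).mp hBT
  have hinv : (B * Tmat n1 n2 a b)⁻¹ * (B * Tmat n1 n2 a b) = 1 :=
    Matrix.nonsing_inv_mul _ hdet
  have hBq : B.mulVec (∫ θ in a..b, Qv θ) = -((B * Tmat n1 n2 a b).mulVec xbc) := by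
    have h := congrArg (fun v => B.mulVec v) hkey
    simp only [Matrix.mulVec_add, Matrix.mulVec_mulVec] at h
    rw [hBbf] at h
    exact eq_neg_of_add_eq_zero_right h
  set M : Matrix (D1I n1 n2) (BfI n1 n2) ℝ := Vmat n1 n2 * (B * Tmat n1 n2 a b)⁻¹ * B with hM
  have hG5eq : ∀ s θ : ℝ, (G5fun n0 n1 n2 a b B s θ).mulVec (Xh θ) = -(M.mulVec (Qv θ)) := by
    intro s θ
    show (G5fun n0 n1 n2 a b B s θ).mulVec (Xh θ)
      = -(M.mulVec ((Qmat n0 n1 n2 b θ).mulVec (Xh θ)))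
    simp only [G5fun, hM, Matrix.neg_mulVec, Matrix.mulVec_mulVec, Matrix.mul_assoc]
  have hG5II : ∀ s : ℝ, ∀ c ∈ Icc a b, ∀ d ∈ Icc a b,
      IntervalIntegrable (fun θ => (G5fun n0 n1 n2 a b B s θ).mulVec (Xh θ)) volume c d := by
    intro s c hc d hd
    have h := Stmt8Aux.clm_comp_intervalIntegrable (-(Stmt8Aux.mulVecCLM M)) (hQvII c hc d hd)
    have hfe : (fun θ => (G5fun n0 n1 n2 a b B s θ).mulVec (Xh θ))
        = fun θ => (-(Stmt8Aux.mulVecCLM M)) (Qv θ) := by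
      funext θ
      simp [hG5eq s θ]
    rw [hfe]
    exact h
  have hG5sum : ∀ s : ℝ,
      (∫ θ in a..b, (G5fun n0 n1 n2 a b B s θ).mulVec (Xh θ))
        = Sum.elim (0 : Fin n1 → ℝ) (x2' a) := by
    intro s
    have h1 : (∫ θ in a..b, (G5fun n0 n1 n2 a b B s θ).mulVec (Xh θ))
        = -(M.mulVec (∫ θ in a..b, Qv θ)) := by
      rw [show (fun θ => (G5fun n0 n1 n2 a b B s θ).mulVec (Xh θ))
          = fun θ => -((Stmt8Aux.mulVecCLM M) (Qv θ)) from funext fun θ => by simp [hG5eq s θ]]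
      rw [intervalIntegral.integral_neg, (Stmt8Aux.mulVecCLM M).intervalIntegral_comp_comm hQvab]
      simp
    have h2 : M.mulVec (∫ θ in a..b, Qv θ) = -((Vmat n1 n2).mulVec xbc) := by
      rw [hM, ← Matrix.mulVec_mulVec, hBq, Matrix.mulVec_neg, Matrix.mulVec_mulVec,
        Matrix.mul_assoc, hinv, Matrix.mul_one]
    rw [h1, h2, neg_neg]
    funext r
    rcases r with i | i <;>
      simp [Vmat, hxbc, Matrix.mulVec, dotProduct, Fintype.sum_sum_type]
  filter_upwards [ae_restrict_mem measurableSet_Icc] with s hs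
  have hL4II : IntervalIntegrable (fun θ => (L4mat n0 n1 n2).mulVec (Xh θ)) volume a s := by
    have h := Stmt8Aux.clm_comp_intervalIntegrable (Stmt8Aux.mulVecCLM (L4mat n0 n1 n2))
      (hXII a hamem s hs)
    simpa using h
  simp only [Hcal, PIop]
  have hsplitG4 : (∫ θ in a..s, (G4fun n0 n1 n2 a b B s θ).mulVec (Xh θ))
      = (∫ θ in a..s, (L4mat n0 n1 n2).mulVec (Xh θ))
        + ∫ θ in a..s, (G5fun n0 n1 n2 a b B s θ).mulVec (Xh θ) := by
    rw [← intervalIntegral.integral_add hL4II (hG5II s a hamem s hs)]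
    congr 1
    funext θ
    rw [G4fun, Matrix.add_mulVec]
  have hadj : (∫ θ in a..s, (G5fun n0 n1 n2 a b B s θ).mulVec (Xh θ))
      + (∫ θ in s..b, (G5fun n0 n1 n2 a b B s θ).mulVec (Xh θ))
      = Sum.elim (0 : Fin n1 → ℝ) (x2' a) := by
    rw [intervalIntegral.integral_add_adjacent_intervals (hG5II s a hamem s hs)
      (hG5II s s hs b hbmem)]
    exact hG5sum s
  rw [hsplitG4]
  have hre : (G3mat n0 n1 n2).mulVec (Xh s)
      + ((∫ θ in a..s, (L4mat n0 n1 n2).mulVec (Xh θ))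
        + ∫ θ in a..s, (G5fun n0 n1 n2 a b B s θ).mulVec (Xh θ))
      + (∫ θ in s..b, (G5fun n0 n1 n2 a b B s θ).mulVec (Xh θ))
      = (G3mat n0 n1 n2).mulVec (Xh s)
      + (∫ θ in a..s, (L4mat n0 n1 n2).mulVec (Xh θ))
      + Sum.elim (0 : Fin n1 → ℝ) (x2' a) := by
    rw [← hadj]
    abel
  rw [hre]
  funext r
  simp only [Pi.add_apply]
  rw [Stmt8Aux.iint_apply hL4II r]
  rcases r with i | i
  · simp [G3mat, L4mat, Matrix.mulVec, dotProduct, Fintype.sum_sum_type, hXh, stack3]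
  · have h := congrFun (hx2de s hs) i
    rw [Pi.add_apply, Stmt8Aux.iint_apply (hx2''II a hamem s hs) i] at h
    simp only [Sum.elim_inr]
    simp [G3mat, L4mat, Matrix.mulVec, dotProduct, Fintype.sum_sum_type, hXh, stack3]
    linarith [h]

end
end

section
/- Let a < b, n0, n1, n2 ∈ ℕ, and let B ∈ ℝ^{(n1+2n2)×(2n1+4n2)} be such that BT is invertible. If x = (x0, x1, x2) ∈ X satisfies x0 = 0 almost everywhere, x1' = 0 almost everywhere, and x2'' = 0 almost everywhere, then x1(s) = 0 and x2(s) = 0 for every s ∈ [a,b]. Consequently the bilinear form ⟨x,y⟩_X := ⟨x0,y0⟩_{L²} + ⟨x1',y1'⟩_{L²} + ⟨x2'',y2''⟩_{L²} is a genuine inner product on X. -/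
open MeasureTheory Set Matrix ENNReal

noncomputable section

private lemma dotSelf_nonneg {n : ℕ} (v : Fin n → ℝ) : 0 ≤ v ⬝ᵥ v :=
  Finset.sum_nonneg fun i _ => mul_self_nonneg _

private lemma ae_zero_of_int_dot_self {n : ℕ} (a b : ℝ) (hab : a ≤ b)
    (u : ℝ → Fin n → ℝ) (hu : MemLp u 2 (volume.restrict (Icc a b)))
    (h : (∫ s in a..b, u s ⬝ᵥ u s) = 0) :
    ∀ᵐ s ∂(volume.restrict (Icc a b)), u s = 0 := by
  have hres : volume.restrict (Icc a b) = volume.restrict (Ioc a b) :=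
    Measure.restrict_congr_set Ioc_ae_eq_Icc.symm
  rw [hres] at hu ⊢
  have hui : ∀ i : Fin n, Integrable (fun s => u s i ^ 2) (volume.restrict (Ioc a b)) := by
    intro i
    exact (((ContinuousLinearMap.proj i : (Fin n → ℝ) →L[ℝ] ℝ).comp_memLp' hu)).integrable_sq
  have hint : Integrable (fun s => u s ⬝ᵥ u s) (volume.restrict (Ioc a b)) := by
    have : Integrable (fun s => ∑ i, u s i ^ 2) (volume.restrict (Ioc a b)) :=
      integrable_finset_sum _ fun i _ => hui i
    refine this.congr (Filter.Eventually.of_forall fun s => ?_)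
    simp [dotProduct, sq]
  have h0 : (∫ s in Ioc a b, u s ⬝ᵥ u s) = 0 := by
    rwa [intervalIntegral.integral_of_le hab] at h
  have hae : (fun s => u s ⬝ᵥ u s) =ᶠ[ae (volume.restrict (Ioc a b))] 0 :=
    (integral_eq_zero_iff_of_nonneg (fun s => dotSelf_nonneg (u s)) hint).mp h0
  filter_upwards [hae] with s hs
  funext i
  have : ∑ j, u s j * u s j = 0 := hs
  have := (Finset.sum_eq_zero_iff_of_nonneg (fun j _ => mul_self_nonneg (u s j))).mp this
    i (Finset.mem_univ i)
  exact mul_self_eq_zero.mp this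

/-- if x ∈ X has vanishing fundamental state (x0 = 0 a.e., x1' = 0 a.e.,
x2'' = 0 a.e.) then x1 and x2 vanish identically on [a,b]; consequently the X-bilinear
form ⟨x,x⟩_X = 0 forces x to vanish, i.e. it is a genuine inner product on X. -/
theorem stmt10 (a b : ℝ) (hab : a < b) (n0 n1 n2 : ℕ)
    (B : Matrix (BcI n1 n2) (BfI n1 n2) ℝ)
    (hBT : IsUnit (B * Tmat n1 n2 a b))
    (x0 : ℝ → Fin n0 → ℝ) (x1 x1' : ℝ → Fin n1 → ℝ) (x2 x2' x2'' : ℝ → Fin n2 → ℝ)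
    (hX : InX a b B x0 x1 x1' x2 x2' x2'') :
    ((∀ᵐ s ∂(volume.restrict (Icc a b)), x0 s = 0) →
      (∀ᵐ s ∂(volume.restrict (Icc a b)), x1' s = 0) →
      (∀ᵐ s ∂(volume.restrict (Icc a b)), x2'' s = 0) →
      ∀ s ∈ Icc a b, x1 s = 0 ∧ x2 s = 0) ∧
    (L2inner a b x0 x0 + L2inner a b x1' x1' + L2inner a b x2'' x2'' = 0 →
      (∀ᵐ s ∂(volume.restrict (Icc a b)), x0 s = 0) ∧
      ∀ s ∈ Icc a b, x1 s = 0 ∧ x2 s = 0) := by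
  obtain ⟨hx0, hx1, hx2, hbc⟩ := hX
  have key : (∀ᵐ s ∂(volume.restrict (Icc a b)), x1' s = 0) →
      (∀ᵐ s ∂(volume.restrict (Icc a b)), x2'' s = 0) →
      ∀ s ∈ Icc a b, x1 s = 0 ∧ x2 s = 0 := by
    intro h1 h2
    -- integrals of a.e.-zero derivatives vanish
    have hint1 : ∀ s ∈ Icc a b, (∫ η in a..s, x1' η) = 0 := by
      intro s hs
      rw [intervalIntegral.integral_of_le hs.1]
      refine integral_eq_zero_of_ae ?_
      exact ae_restrict_of_ae_restrict_of_subset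
        (Ioc_subset_Icc_self.trans (Icc_subset_Icc le_rfl hs.2)) h1
    have hint2 : ∀ s ∈ Icc a b, (∫ η in a..s, x2'' η) = 0 := by
      intro s hs
      rw [intervalIntegral.integral_of_le hs.1]
      refine integral_eq_zero_of_ae ?_
      exact ae_restrict_of_ae_restrict_of_subset
        (Ioc_subset_Icc_self.trans (Icc_subset_Icc le_rfl hs.2)) h2
    -- x1 constant, x2' constant, x2 affine
    have hx1c : ∀ s ∈ Icc a b, x1 s = x1 a := by
      intro s hs; rw [hx1.2 s hs, hint1 s hs, add_zero]
    have hx2'c : ∀ s ∈ Icc a b, x2' s = x2' a := by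
      intro s hs; rw [hx2.2.2 s hs, hint2 s hs, add_zero]
    have hx2aff : ∀ s ∈ Icc a b, x2 s = x2 a + (s - a) • x2' a := by
      intro s hs
      rw [hx2.1 s hs]
      congr 1
      rw [show (∫ η in a..s, x2' η) = ∫ η in a..s, x2' a from
        intervalIntegral.integral_congr fun η hη => by
          rw [uIcc_of_le hs.1] at hη
          exact hx2'c η ⟨hη.1, hη.2.trans hs.2⟩,
        intervalIntegral.integral_const]
    -- boundary vector factors through T
    set v : BcI n1 n2 → ℝ := Sum.elim (x1 a) (Sum.elim (x2 a) (x2' a)) with hv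
    have haI : a ∈ Icc a b := ⟨le_rfl, hab.le⟩
    have hbI : b ∈ Icc a b := ⟨hab.le, le_rfl⟩
    have hTfac : (Tmat n1 n2 a b).mulVec v = bfvec x1 x2 x2' a b := by
      funext r
      have h1b := hx1c b hbI
      have h2b := hx2aff b hbI
      have h2'b := hx2'c b hbI
      rcases r with i | i | i | i | i | i <;>
        simp [Tmat, bfvec, Matrix.mulVec, dotProduct, Fintype.sum_sum_type, hv,
          h1b, h2b, h2'b, ite_mul, Pi.add_apply, Pi.smul_apply, smul_eq_mul, mul_comm]
    have hBTv : (B * Tmat n1 n2 a b).mulVec v = 0 := by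
      rw [← Matrix.mulVec_mulVec, hTfac, hbc]
    have hdet : IsUnit (B * Tmat n1 n2 a b).det :=
      (Matrix.isUnit_iff_isUnit_det _).mp hBT
    have hv0 : v = 0 := by
      have := congrArg ((B * Tmat n1 n2 a b)⁻¹).mulVec hBTv
      rwa [Matrix.mulVec_mulVec, Matrix.nonsing_inv_mul _ hdet, Matrix.one_mulVec,
        Matrix.mulVec_zero] at this
    have h1a : x1 a = 0 := funext fun i => congrFun hv0 (Sum.inl i)
    have h2a : x2 a = 0 := funext fun i => congrFun hv0 (Sum.inr (Sum.inl i))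
    have h2'a : x2' a = 0 := funext fun i => congrFun hv0 (Sum.inr (Sum.inr i))
    intro s hs
    refine ⟨by rw [hx1c s hs, h1a], by rw [hx2aff s hs, h2a, h2'a, smul_zero, add_zero]⟩
  constructor
  · intro _ h1 h2; exact key h1 h2
  · intro hsum
    have e0 : 0 ≤ L2inner a b x0 x0 :=
      intervalIntegral.integral_nonneg hab.le fun s _ => dotSelf_nonneg _
    have e1 : 0 ≤ L2inner a b x1' x1' :=
      intervalIntegral.integral_nonneg hab.le fun s _ => dotSelf_nonneg _
    have e2 : 0 ≤ L2inner a b x2'' x2'' :=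
      intervalIntegral.integral_nonneg hab.le fun s _ => dotSelf_nonneg _
    have z0 : L2inner a b x0 x0 = 0 := by linarith
    have z1 : L2inner a b x1' x1' = 0 := by linarith
    have z2 : L2inner a b x2'' x2'' = 0 := by linarith
    have a0 := ae_zero_of_int_dot_self a b hab.le x0 hx0 z0
    have a1 := ae_zero_of_int_dot_self a b hab.le x1' hx1.1 z1
    have a2 := ae_zero_of_int_dot_self a b hab.le x2'' hx2.2.1 z2
    exact ⟨a0, key a1 a2⟩

end
end

section
/- Let a < b, n0, n1, n2 ∈ ℕ, and let B ∈ ℝ^{(n1+2n2)×(2n1+4n2)} be such that BT is invertible. For x = (x0,x1,x2) ∈ X define ‖x‖_X := ‖(x0, x1', x2'')‖_{L²} and ‖x‖_{L2×H1×H2} := ‖(0, x1, x2)‖_{L²} + ‖x2'‖_{L²} + ‖(x0, x1', x2'')‖_{L²}. Then for every x ∈ X, ‖x‖_X ≤ ‖x‖_{L2×H1×H2}, and there exists a constant c > 0 (depending only on a, b, B, n0, n1, n2) such that ‖x‖_{L2×H1×H2} ≤ c ‖x‖_X for every x ∈ X. Hence the two norms are equivalent on X. -/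
open MeasureTheory Set Matrix ENNReal

noncomputable section

lemma abs_mulVec_le {ι κ : Type*} [Fintype ι] [Fintype κ] (M : Matrix κ ι ℝ) (v : ι → ℝ)
    {C : ℝ} (hC : 0 ≤ C) (hv : ∀ i, |v i| ≤ C) (k : κ) :
    |M.mulVec v k| ≤ (∑ r, ∑ c, |M r c|) * C := by
  calc |M.mulVec v k| = |∑ c, M k c * v c| := rfl
    _ ≤ ∑ c, |M k c * v c| := Finset.abs_sum_le_sum_abs _ _
    _ ≤ ∑ c, |M k c| * C := by
        refine Finset.sum_le_sum fun c _ => ?_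
        rw [abs_mul]
        exact mul_le_mul_of_nonneg_left (hv c) (abs_nonneg _)
    _ = (∑ c, |M k c|) * C := by rw [Finset.sum_mul]
    _ ≤ (∑ r, ∑ c, |M r c|) * C := by
        refine mul_le_mul_of_nonneg_right ?_ hC
        exact Finset.single_le_sum (f := fun r => ∑ c, |M r c|)
          (fun r _ => Finset.sum_nonneg fun c _ => abs_nonneg _) (Finset.mem_univ k)

lemma norm_primitive_le {n : ℕ} {f : ℝ → Fin n → ℝ} {a b s : ℝ}
    (hf : IntegrableOn f (Icc a b)) (hs : s ∈ Icc a b) :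
    ‖∫ η in a..s, f η‖ ≤ ∫ t in Icc a b, ‖f t‖ := by
  have hab : a ≤ b := hs.1.trans hs.2
  have hni : IntervalIntegrable (fun t => ‖f t‖) volume a b := by
    refine IntegrableOn.intervalIntegrable ?_
    rw [Set.uIcc_of_le hab]; exact hf.norm
  calc ‖∫ η in a..s, f η‖ ≤ ∫ η in a..s, ‖f η‖ :=
        intervalIntegral.norm_integral_le_integral_norm hs.1
    _ ≤ ∫ η in a..b, ‖f η‖ :=
        intervalIntegral.integral_mono_interval le_rfl hs.1 hs.2
          (ae_of_all _ fun t => norm_nonneg _) hni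
    _ = ∫ t in Icc a b, ‖f t‖ := by
        rw [intervalIntegral.integral_of_le hab, integral_Icc_eq_integral_Ioc]

lemma Tmat_mulVec {n1 n2 : ℕ} (a b : ℝ) (u : Fin n1 → ℝ) (v w : Fin n2 → ℝ) :
    (Tmat n1 n2 a b).mulVec (Sum.elim u (Sum.elim v w)) =
      Sum.elim u (Sum.elim u (Sum.elim v (Sum.elim (fun i => v i + (b - a) * w i)
        (Sum.elim w w)))) := by
  funext k
  rcases k with k | k | k | k | k | k <;>
    simp [Tmat, Matrix.mulVec, dotProduct, Fintype.sum_sum_type, ite_mul,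
      Finset.sum_ite_eq, Finset.sum_ite_eq']

lemma ofReal_setIntegral_norm_le {n : ℕ} {a b : ℝ} (hab : a ≤ b) {f : ℝ → Fin n → ℝ}
    (hf : MemLp f 2 (volume.restrict (Icc a b))) :
    ENNReal.ofReal (∫ t in Icc a b, ‖f t‖) ≤
      eLpNorm f 2 (volume.restrict (Icc a b)) * ENNReal.ofReal (b - a) ^ ((2 : ℝ)⁻¹) := by
  haveI : IsFiniteMeasure (volume.restrict (Icc a b)) :=
    ⟨by rw [Measure.restrict_apply_univ]; exact measure_Icc_lt_top⟩
  have hint : Integrable f (volume.restrict (Icc a b)) := hf.integrable one_le_two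
  rw [show (∫ t in Icc a b, ‖f t‖) = ∫ t, ‖f t‖ ∂(volume.restrict (Icc a b)) from rfl,
    ofReal_integral_norm_eq_lintegral_enorm hint, ← eLpNorm_one_eq_lintegral_enorm]
  have h := eLpNorm_le_eLpNorm_mul_rpow_measure_univ (p := 1) (q := 2)
    (μ := volume.restrict (Icc a b)) one_le_two hf.1
  rw [Measure.restrict_apply_univ, Real.volume_Icc] at h
  convert h using 2
  norm_num

set_option maxHeartbeats 2000000 in
/-- on X, the norm ‖x‖_X = ‖(x0,x1',x2'')‖_{L²} and the norm
‖x‖_{L2×H1×H2} = ‖(0,x1,x2)‖_{L²} + ‖x2'‖_{L²} + ‖(x0,x1',x2'')‖_{L²} are equivalent. -/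
theorem stmt11 (a b : ℝ) (hab : a < b) (n0 n1 n2 : ℕ)
    (B : Matrix (BcI n1 n2) (BfI n1 n2) ℝ)
    (hBT : IsUnit (B * Tmat n1 n2 a b)) :
    (∀ (x0 : ℝ → Fin n0 → ℝ) (x1 x1' : ℝ → Fin n1 → ℝ) (x2 x2' x2'' : ℝ → Fin n2 → ℝ),
      InX a b B x0 x1 x1' x2 x2' x2'' →
        eLpNorm (stack3 x0 x1' x2'') 2 (volume.restrict (Icc a b)) ≤
          eLpNorm (stack3 (fun (_ : ℝ) (_ : Fin n0) => (0 : ℝ)) x1 x2) 2 (volume.restrict (Icc a b)) +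
            eLpNorm x2' 2 (volume.restrict (Icc a b)) +
            eLpNorm (stack3 x0 x1' x2'') 2 (volume.restrict (Icc a b))) ∧
    ∃ c : NNReal, 0 < c ∧
      ∀ (x0 : ℝ → Fin n0 → ℝ) (x1 x1' : ℝ → Fin n1 → ℝ) (x2 x2' x2'' : ℝ → Fin n2 → ℝ),
        InX a b B x0 x1 x1' x2 x2' x2'' →
          eLpNorm (stack3 (fun (_ : ℝ) (_ : Fin n0) => (0 : ℝ)) x1 x2) 2 (volume.restrict (Icc a b)) +
              eLpNorm x2' 2 (volume.restrict (Icc a b)) +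
              eLpNorm (stack3 x0 x1' x2'') 2 (volume.restrict (Icc a b)) ≤
            (c : ℝ≥0∞) * eLpNorm (stack3 x0 x1' x2'') 2 (volume.restrict (Icc a b)) := by
  have habl : a ≤ b := hab.le
  have hba : 0 ≤ b - a := by linarith
  haveI : IsFiniteMeasure (volume.restrict (Icc a b)) :=
    ⟨by rw [Measure.restrict_apply_univ]; exact measure_Icc_lt_top⟩
  constructor
  · intro x0 x1 x1' x2 x2' x2'' _
    exact le_add_self
  set G : Matrix (BcI n1 n2) (BfI n1 n2) ℝ := (B * Tmat n1 n2 a b)⁻¹ * B with hG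
  set CB : ℝ := ∑ r, ∑ c, |G r c| with hCBdef
  have hCB0 : 0 ≤ CB := Finset.sum_nonneg fun r _ => Finset.sum_nonneg fun c _ => abs_nonneg _
  set C2 : ℝ := (1 + (b - a)) * (CB * (1 + (b - a)) + 1) with hC2def
  have hC20 : 0 ≤ C2 := by
    have h1 : (0:ℝ) ≤ 1 + (b - a) := by linarith
    have h2 : (0:ℝ) ≤ CB * (1 + (b - a)) + 1 := by nlinarith
    rw [hC2def]; exact mul_nonneg h1 h2
  refine ⟨(4 * C2 * (b - a) + 1).toNNReal, ?_, ?_⟩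
  · rw [Real.toNNReal_pos]
    nlinarith [mul_nonneg (mul_nonneg (by norm_num : (0:ℝ) ≤ 4) hC20) hba]
  intro x0 x1 x1' x2 x2' x2'' hx
  obtain ⟨hx0m, ⟨hx1'm, hx1e⟩, ⟨hx2e, hx2''m, hx2'e⟩, hB0⟩ := hx
  have hx1'int : IntegrableOn x1' (Icc a b) := hx1'm.integrable one_le_two
  have hx2''int : IntegrableOn x2'' (Icc a b) := hx2''m.integrable one_le_two
  have hx2'int : IntegrableOn x2' (Icc a b) := by
    have hc : ContinuousOn (fun s => x2' a + ∫ η in a..s, x2'' η) (Icc a b) := by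
      refine continuousOn_const.add ?_
      have := intervalIntegral.continuousOn_primitive_interval (a := a) (b := b)
        (μ := volume) (f := x2'') (by rwa [Set.uIcc_of_le habl])
      rwa [Set.uIcc_of_le habl] at this
    exact (hc.integrableOn_Icc).congr_fun (fun s hs => (hx2'e s hs).symm) measurableSet_Icc
  have hx2'ii : IntervalIntegrable x2' volume a b := by
    refine IntegrableOn.intervalIntegrable ?_
    rw [Set.uIcc_of_le habl]; exact hx2'int
  set I1 : ℝ := ∫ t in Icc a b, ‖x1' t‖ with hI1def
  set I2 : ℝ := ∫ t in Icc a b, ‖x2'' t‖ with hI2def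
  have hI10 : 0 ≤ I1 := integral_nonneg fun t => norm_nonneg _
  have hI20 : 0 ≤ I2 := integral_nonneg fun t => norm_nonneg _
  have hd1 : ∀ s ∈ Icc a b, ‖x1 s - x1 a‖ ≤ I1 := by
    intro s hs
    rw [hx1e s hs]
    simpa using norm_primitive_le hx1'int hs
  have hd2' : ∀ s ∈ Icc a b, ‖x2' s - x2' a‖ ≤ I2 := by
    intro s hs
    rw [hx2'e s hs]
    simpa using norm_primitive_le hx2''int hs
  -- boundary vector analysis
  set bc : BcI n1 n2 → ℝ := Sum.elim (x1 a) (Sum.elim (x2 a) (x2' a)) with hbcdef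
  set rr : BfI n1 n2 → ℝ :=
    fun k => bfvec x1 x2 x2' a b k - (Tmat n1 n2 a b).mulVec bc k with hrrdef
  set RB : ℝ := (1 + (b - a)) * (I1 + I2) with hRBdef
  have hRB0 : 0 ≤ RB := by nlinarith
  have hTbc : (Tmat n1 n2 a b).mulVec bc =
      Sum.elim (x1 a) (Sum.elim (x1 a) (Sum.elim (x2 a)
        (Sum.elim (fun i => x2 a i + (b - a) * x2' a i) (Sum.elim (x2' a) (x2' a))))) :=
    Tmat_mulVec a b _ _ _
  have hbmem : b ∈ Icc a b := ⟨habl, le_rfl⟩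
  have hrrle : ∀ k, |rr k| ≤ RB := by
    have key : x2 b - x2 a - (b - a) • (x2' a) = ∫ θ in a..b, (x2' θ - x2' a) := by
      rw [intervalIntegral.integral_sub hx2'ii intervalIntegrable_const,
        intervalIntegral.integral_const, hx2e b hbmem]
      abel
    have keyb : ‖x2 b - x2 a - (b - a) • (x2' a)‖ ≤ I2 * (b - a) := by
      rw [key]
      have := intervalIntegral.norm_integral_le_of_norm_le_const
        (C := I2) (f := fun θ => x2' θ - x2' a) (a := a) (b := b) ?_
      · rwa [abs_of_nonneg hba] at this
      · intro θ hθ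
        rw [Set.uIoc_of_le habl] at hθ
        exact hd2' θ (Ioc_subset_Icc_self hθ)
    intro k
    rcases k with k | k | k | k | k | k
    · simp [hrrdef, bfvec, hTbc, hRB0]
    · have : |rr (Sum.inr (Sum.inl k))| = ‖(x1 b - x1 a) k‖ := by
        simp [hrrdef, bfvec, hTbc, Real.norm_eq_abs]
      rw [this]
      refine ((norm_le_pi_norm _ k).trans ((hd1 b hbmem).trans ?_))
      nlinarith
    · simp [hrrdef, bfvec, hTbc, hRB0]
    · have : |rr (Sum.inr (Sum.inr (Sum.inr (Sum.inl k))))| =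
          ‖(x2 b - x2 a - (b - a) • (x2' a)) k‖ := by
        simp [hrrdef, bfvec, hTbc, Real.norm_eq_abs, smul_eq_mul, sub_sub]
      rw [this]
      refine (norm_le_pi_norm _ k).trans (keyb.trans ?_)
      nlinarith
    · simp [hrrdef, bfvec, hTbc, hRB0]
    · have : |rr (Sum.inr (Sum.inr (Sum.inr (Sum.inr (Sum.inr k)))))| =
          ‖(x2' b - x2' a) k‖ := by
        simp [hrrdef, bfvec, hTbc, Real.norm_eq_abs]
      rw [this]
      refine (norm_le_pi_norm _ k).trans ((hd2' b hbmem).trans ?_)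
      nlinarith
  have hsplit : bfvec x1 x2 x2' a b = (Tmat n1 n2 a b).mulVec bc + rr := by
    funext k; simp [hrrdef]
  have h1 : (B * Tmat n1 n2 a b).mulVec bc = -(B.mulVec rr) := by
    have h0 := hB0
    rw [hsplit, Matrix.mulVec_add, Matrix.mulVec_mulVec] at h0
    exact eq_neg_of_add_eq_zero_left h0
  have hdet : IsUnit (B * Tmat n1 n2 a b).det := (Matrix.isUnit_iff_isUnit_det _).mp hBT
  have hbceq : bc = -(G.mulVec rr) := by
    calc bc = ((B * Tmat n1 n2 a b)⁻¹ * (B * Tmat n1 n2 a b)).mulVec bc := by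
          rw [Matrix.nonsing_inv_mul _ hdet, Matrix.one_mulVec]
      _ = (B * Tmat n1 n2 a b)⁻¹.mulVec ((B * Tmat n1 n2 a b).mulVec bc) := by
          rw [Matrix.mulVec_mulVec]
      _ = -(G.mulVec rr) := by
          rw [h1, Matrix.mulVec_neg, hG, Matrix.mulVec_mulVec]
  have hbcle : ∀ k, |bc k| ≤ CB * RB := by
    intro k
    rw [hbceq]
    simp only [Pi.neg_apply, abs_neg]
    exact abs_mulVec_le G rr hRB0 hrrle k

  -- norms of boundary values
  have pos1 : (0:ℝ) ≤ CB * RB := mul_nonneg hCB0 hRB0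
  have hx1a : ‖x1 a‖ ≤ CB * RB := by
    refine (pi_norm_le_iff_of_nonneg pos1).2 fun i => ?_
    simpa [hbcdef, Real.norm_eq_abs] using hbcle (Sum.inl i)
  have hx2'a : ‖x2' a‖ ≤ CB * RB := by
    refine (pi_norm_le_iff_of_nonneg pos1).2 fun i => ?_
    simpa [hbcdef, Real.norm_eq_abs] using hbcle (Sum.inr (Sum.inr i))
  have hx2a : ‖x2 a‖ ≤ CB * RB := by
    refine (pi_norm_le_iff_of_nonneg pos1).2 fun i => ?_
    simpa [hbcdef, Real.norm_eq_abs] using hbcle (Sum.inr (Sum.inl i))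
  -- pointwise bounds
  have hb1 : ∀ s ∈ Icc a b, ‖x1 s‖ ≤ CB * RB + I1 := by
    intro s hs
    calc ‖x1 s‖ = ‖x1 a + (x1 s - x1 a)‖ := by congr 1; abel
      _ ≤ ‖x1 a‖ + ‖x1 s - x1 a‖ := norm_add_le _ _
      _ ≤ CB * RB + I1 := add_le_add hx1a (hd1 s hs)
  have hb2' : ∀ s ∈ Icc a b, ‖x2' s‖ ≤ CB * RB + I2 := by
    intro s hs
    calc ‖x2' s‖ = ‖x2' a + (x2' s - x2' a)‖ := by congr 1; abel
      _ ≤ ‖x2' a‖ + ‖x2' s - x2' a‖ := norm_add_le _ _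
      _ ≤ CB * RB + I2 := add_le_add hx2'a (hd2' s hs)
  have hI2' : (∫ t in Icc a b, ‖x2' t‖) ≤ (b - a) * (CB * RB + I2) := by
    have hle : (∫ t in Icc a b, ‖x2' t‖) ≤ ∫ _t in Icc a b, (CB * RB + I2) :=
      setIntegral_mono_on hx2'int.norm
        (integrableOn_const measure_Icc_lt_top.ne) measurableSet_Icc hb2'
    refine hle.trans ?_
    rw [setIntegral_const, smul_eq_mul, measureReal_def, Real.volume_Icc, ENNReal.toReal_ofReal hba]
  have hd2 : ∀ s ∈ Icc a b, ‖x2 s - x2 a‖ ≤ (b - a) * (CB * RB + I2) := by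
    intro s hs
    rw [hx2e s hs]
    simpa using (norm_primitive_le hx2'int hs).trans hI2'
  have hb2 : ∀ s ∈ Icc a b, ‖x2 s‖ ≤ CB * RB + (b - a) * (CB * RB + I2) := by
    intro s hs
    calc ‖x2 s‖ = ‖x2 a + (x2 s - x2 a)‖ := by congr 1; abel
      _ ≤ ‖x2 a‖ + ‖x2 s - x2 a‖ := norm_add_le _ _
      _ ≤ CB * RB + (b - a) * (CB * RB + I2) := add_le_add hx2a (hd2 s hs)
  have pos2 : (0:ℝ) ≤ (b - a) * (CB * RB + I2) := mul_nonneg hba (add_nonneg pos1 hI20)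
  set K : ℝ := CB * RB + I1 + (b - a) * (CB * RB + I2) + I2 with hKdef
  have hK0 : 0 ≤ K := by nlinarith
  have hb1K : ∀ s ∈ Icc a b, ‖x1 s‖ ≤ K := fun s hs => (hb1 s hs).trans (by nlinarith)
  have hb2K : ∀ s ∈ Icc a b, ‖x2 s‖ ≤ K := fun s hs => (hb2 s hs).trans (by nlinarith)
  have hb2'K : ∀ s ∈ Icc a b, ‖x2' s‖ ≤ K := fun s hs => (hb2' s hs).trans (by nlinarith)
  have hKJ : K ≤ C2 * (I1 + I2) := by
    rw [hKdef, hC2def, hRBdef]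
    nlinarith [mul_nonneg hba hI10, mul_nonneg hCB0 (add_nonneg hI10 hI20)]
  -- eLpNorm estimates
  set q : ℝ≥0∞ := ENNReal.ofReal (b - a) ^ ((2:ℝ)⁻¹) with hqdef
  set D : ℝ≥0∞ := eLpNorm (stack3 x0 x1' x2'') 2 (volume.restrict (Icc a b)) with hDdef
  have hstb : ∀ s ∈ Icc a b, ‖stack3 (fun (_ : ℝ) (_ : Fin n0) => (0:ℝ)) x1 x2 s‖ ≤ K := by
    intro s hs
    refine (pi_norm_le_iff_of_nonneg hK0).2 fun i => ?_
    rcases i with i | i | i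
    · simpa [stack3] using hK0
    · exact (norm_le_pi_norm (x1 s) i).trans (hb1K s hs)
    · exact (norm_le_pi_norm (x2 s) i).trans (hb2K s hs)
  have e2 : ((2:ℝ≥0∞).toReal)⁻¹ = ((2:ℝ))⁻¹ := by norm_num
  have hE1 : eLpNorm (stack3 (fun (_ : ℝ) (_ : Fin n0) => (0:ℝ)) x1 x2) 2
      (volume.restrict (Icc a b)) ≤ q * ENNReal.ofReal K := by
    have h := eLpNorm_le_of_ae_bound (p := (2:ℝ≥0∞)) (μ := volume.restrict (Icc a b))
      (f := stack3 (fun (_ : ℝ) (_ : Fin n0) => (0:ℝ)) x1 x2)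
      ((ae_restrict_iff' measurableSet_Icc).2 (ae_of_all _ hstb))
    rwa [Measure.restrict_apply_univ, Real.volume_Icc, e2] at h
  have hE2 : eLpNorm x2' 2 (volume.restrict (Icc a b)) ≤ q * ENNReal.ofReal K := by
    have h := eLpNorm_le_of_ae_bound (p := (2:ℝ≥0∞)) (μ := volume.restrict (Icc a b))
      (f := x2') ((ae_restrict_iff' measurableSet_Icc).2 (ae_of_all _ hb2'K))
    rwa [Measure.restrict_apply_univ, Real.volume_Icc, e2] at h
  have hN1 : eLpNorm x1' 2 (volume.restrict (Icc a b)) ≤ D := by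
    refine eLpNorm_mono fun s => ?_
    refine (pi_norm_le_iff_of_nonneg (norm_nonneg _)).2 fun i => ?_
    exact norm_le_pi_norm (stack3 x0 x1' x2'' s) (Sum.inr (Sum.inl i))
  have hN2 : eLpNorm x2'' 2 (volume.restrict (Icc a b)) ≤ D := by
    refine eLpNorm_mono fun s => ?_
    refine (pi_norm_le_iff_of_nonneg (norm_nonneg _)).2 fun i => ?_
    exact norm_le_pi_norm (stack3 x0 x1' x2'' s) (Sum.inr (Sum.inr i))
  have hcs1 : ENNReal.ofReal I1 ≤ D * q :=
    (ofReal_setIntegral_norm_le habl hx1'm).trans (mul_le_mul_left hN1 _)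
  have hcs2 : ENNReal.ofReal I2 ≤ D * q :=
    (ofReal_setIntegral_norm_le habl hx2''m).trans (mul_le_mul_left hN2 _)
  have hKD : ENNReal.ofReal K ≤ ENNReal.ofReal C2 * (2 * (D * q)) := by
    calc ENNReal.ofReal K ≤ ENNReal.ofReal (C2 * (I1 + I2)) := ENNReal.ofReal_le_ofReal hKJ
      _ = ENNReal.ofReal C2 * (ENNReal.ofReal I1 + ENNReal.ofReal I2) := by
          rw [ENNReal.ofReal_mul hC20, ENNReal.ofReal_add hI10 hI20]
      _ ≤ ENNReal.ofReal C2 * (D * q + D * q) := mul_le_mul_right (add_le_add hcs1 hcs2) _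
      _ = ENNReal.ofReal C2 * (2 * (D * q)) := by ring
  have hofreal_ne : ENNReal.ofReal (b - a) ≠ 0 := by
    simp only [ne_eq, ENNReal.ofReal_eq_zero, not_le]; linarith
  have hqq : q * q = ENNReal.ofReal (b - a) := by
    rw [hqdef, ← ENNReal.rpow_add _ _ hofreal_ne ENNReal.ofReal_ne_top]
    norm_num
  have h4C2 : ENNReal.ofReal C2 * 4 * (q * q) = ENNReal.ofReal (4 * C2 * (b - a)) := by
    rw [hqq, show (4:ℝ≥0∞) = ENNReal.ofReal (4:ℝ) by norm_num,
      ← ENNReal.ofReal_mul hC20, ← ENNReal.ofReal_mul (mul_nonneg hC20 (by norm_num))]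
    congr 1; ring
  calc eLpNorm (stack3 (fun (_ : ℝ) (_ : Fin n0) => (0:ℝ)) x1 x2) 2 (volume.restrict (Icc a b))
        + eLpNorm x2' 2 (volume.restrict (Icc a b)) + D
      ≤ q * ENNReal.ofReal K + q * ENNReal.ofReal K + D :=
        add_le_add (add_le_add hE1 hE2) le_rfl
    _ ≤ q * (ENNReal.ofReal C2 * (2 * (D * q))) + q * (ENNReal.ofReal C2 * (2 * (D * q))) + D :=
        add_le_add (add_le_add (mul_le_mul_right hKD _) (mul_le_mul_right hKD _)) le_rfl
    _ = (ENNReal.ofReal C2 * 4 * (q * q)) * D + D := by ring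
    _ = (ENNReal.ofReal (4 * C2 * (b - a)) + 1) * D := by rw [h4C2]; ring
    _ = ((4 * C2 * (b - a) + 1).toNNReal : ℝ≥0∞) * D := by
        have : ((4 * C2 * (b - a) + 1).toNNReal : ℝ≥0∞) = ENNReal.ofReal (4 * C2 * (b - a) + 1) :=
          rfl
        rw [this, ENNReal.ofReal_add (mul_nonneg (mul_nonneg (by norm_num) hC20) hba)
          zero_le_one, ENNReal.ofReal_one]

end
end
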